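/- Let Ξ be a nonempty subset of L^0(X;F), the space of F-measurable random elements of a separable Banach space X with the topology of convergence in probability. If Ξ is F-decomposable (i.e., 1_A ξ + 1_{A^c} η ∈ Ξ for all ξ,η ∈ Ξ and A ∈ F) and closed in probability, then there exists a random closed set Y (a graph-measurable set-valued map with closed values) such that Ξ equals the set of all measurable selections of Y. -/

import Mathlib

open scoped Classical
open MeasureTheory

private lemma minmin (a b : ℝ) : min (min a b) 1 = min (min a 1) (min b 1) := by
  rw [← min_min_min_comm, min_self]

private lemma stmt1_pack {Ω X : Type*} [MeasurableSpace Ω] [NormedAddCommGroup X]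
    [TopologicalSpace.SeparableSpace X] [MeasurableSpace X] [BorelSpace X]
    (P : Measure Ω) [IsProbabilityMeasure P]
    (Ξ : Set (Ω → X)) (hne : Ξ.Nonempty)
    (hmeas : ∀ ξ ∈ Ξ, Measurable ξ)
    (hdec : ∀ ξ ∈ Ξ, ∀ η ∈ Ξ, ∀ A : Set Ω, MeasurableSet A →
      (fun ω => if ω ∈ A then ξ ω else η ω) ∈ Ξ) (x : X) :
    ∃ F : ℕ → Ω → X, (∀ n, F n ∈ Ξ) ∧
      ∀ ξ ∈ Ξ, ∀ᵐ ω ∂P, (⨅ n, min ‖x - F n ω‖ 1) ≤ min ‖x - ξ ω‖ 1 := by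
  haveI : SecondCountableTopology X :=
    UniformSpace.secondCountable_of_separable X
  set uu : (Ω → X) → Ω → ℝ := fun ξ ω => min ‖x - ξ ω‖ 1 with huu
  have hunn : ∀ ξ (ω : Ω), 0 ≤ uu ξ ω := fun ξ ω => le_min (norm_nonneg _) zero_le_one
  have hule : ∀ ξ (ω : Ω), uu ξ ω ≤ 1 := fun ξ ω => min_le_right _ _
  have humeas : ∀ ξ : Ω → X, Measurable ξ → Measurable (uu ξ) := fun ξ hξ =>
    ((measurable_const.sub hξ).norm).min measurable_const
  have huint : ∀ ξ : Ω → X, Measurable ξ → Integrable (uu ξ) P := by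
    intro ξ hξ
    refine (integrable_const (1 : ℝ)).mono' (humeas ξ hξ).aestronglyMeasurable ?_
    exact Filter.Eventually.of_forall fun ω => by
      rw [Real.norm_eq_abs, abs_of_nonneg (hunn ξ ω)]; exact hule ξ ω
  set S : Set ℝ := (fun ξ => ∫ ω, uu ξ ω ∂P) '' Ξ with hS
  have hSne : S.Nonempty := hne.image _
  have hSbdd : BddBelow S := by
    refine ⟨0, ?_⟩
    rintro r ⟨ξ, hξ, rfl⟩
    exact integral_nonneg (hunn ξ)
  set I : ℝ := sInf S with hI
  have hIle : ∀ ξ ∈ Ξ, I ≤ ∫ ω, uu ξ ω ∂P := fun ξ hξ => csInf_le hSbdd ⟨ξ, hξ, rfl⟩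
  have happrox : ∀ n : ℕ, ∃ ξ, ξ ∈ Ξ ∧ ∫ ω, uu ξ ω ∂P < I + 1 / (n + 1) := by
    intro n
    have h1 : I < I + 1 / (n + 1) := by
      have : (0:ℝ) < 1 / (n + 1) := by positivity
      linarith
    obtain ⟨r, ⟨ξ, hξ, rfl⟩, hr⟩ := exists_lt_of_csInf_lt hSne h1
    exact ⟨ξ, hξ, hr⟩
  choose c hcmem hcint using happrox
  set combf : (Ω → X) → (Ω → X) → Ω → X := fun ξ η ω =>
    if ω ∈ {ω' | ‖x - ξ ω'‖ ≤ ‖x - η ω'‖} then ξ ω else η ω with hcombf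
  have hcombmem : ∀ ξ ∈ Ξ, ∀ η ∈ Ξ, combf ξ η ∈ Ξ := by
    intro ξ hξ η hη
    exact hdec ξ hξ η hη _
      (measurableSet_le ((measurable_const.sub (hmeas ξ hξ)).norm)
        ((measurable_const.sub (hmeas η hη)).norm))
  have hcombnorm : ∀ ξ η (ω : Ω), ‖x - combf ξ η ω‖ = min ‖x - ξ ω‖ ‖x - η ω‖ := by
    intro ξ η ω
    by_cases h : ‖x - ξ ω‖ ≤ ‖x - η ω‖
    · simp only [hcombf, Set.mem_setOf_eq, if_pos h, min_eq_left h]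
    · simp only [hcombf, Set.mem_setOf_eq, if_neg h, min_eq_right (le_of_not_ge h)]
  set F : ℕ → Ω → X := fun n => Nat.rec (c 0) (fun n Fn => combf (c (n + 1)) Fn) n with hF
  have hFmem : ∀ n, F n ∈ Ξ := by
    intro n; induction n with
    | zero => exact hcmem 0
    | succ n ih => exact hcombmem _ (hcmem (n + 1)) _ ih
  have hFnorm : ∀ n (ω : Ω), ‖x - F (n + 1) ω‖ = min ‖x - c (n + 1) ω‖ ‖x - F n ω‖ :=
    fun n ω => hcombnorm _ _ ω
  have hFanti : ∀ ω : Ω, Antitone fun n => uu (F n) ω := by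
    intro ω
    refine antitone_nat_of_succ_le fun n => ?_
    have : ‖x - F (n + 1) ω‖ ≤ ‖x - F n ω‖ := by rw [hFnorm]; exact min_le_right _ _
    exact min_le_min this le_rfl
  have hFle_c : ∀ n (ω : Ω), uu (F n) ω ≤ uu (c n) ω := by
    intro n ω
    cases n with
    | zero => exact le_rfl
    | succ n =>
        have : ‖x - F (n + 1) ω‖ ≤ ‖x - c (n + 1) ω‖ := by rw [hFnorm]; exact min_le_left _ _
        exact min_le_min this le_rfl
  have hFint_lt : ∀ n, ∫ ω, uu (F n) ω ∂P < I + 1 / (n + 1) := by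
    intro n
    have := integral_mono (huint _ (hmeas _ (hFmem n))) (huint _ (hmeas _ (hcmem n))) (hFle_c n)
    exact lt_of_le_of_lt this (hcint n)
  set g : Ω → ℝ := fun ω => ⨅ n, uu (F n) ω with hg
  have hgbdd : ∀ ω : Ω, BddBelow (Set.range fun n => uu (F n) ω) := by
    intro ω; exact ⟨0, by rintro r ⟨n, rfl⟩; exact hunn _ ω⟩
  have hgtend : ∀ ω : Ω, Filter.Tendsto (fun n => uu (F n) ω) Filter.atTop (nhds (g ω)) :=
    fun ω => tendsto_atTop_ciInf (hFanti ω) (hgbdd ω)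
  have hgle : ∀ n (ω : Ω), g ω ≤ uu (F n) ω := fun n ω => ciInf_le (hgbdd ω) n
  have hgnn : ∀ ω : Ω, 0 ≤ g ω := fun ω => le_ciInf fun n => hunn _ ω
  have hgmeas : Measurable g :=
    measurable_of_tendsto_metrizable' Filter.atTop
      (fun n => humeas _ (hmeas _ (hFmem n))) (tendsto_pi_nhds.mpr hgtend)
  have hgint : Integrable g P := by
    refine (integrable_const (1 : ℝ)).mono' hgmeas.aestronglyMeasurable ?_
    exact Filter.Eventually.of_forall fun ω => by
      rw [Real.norm_eq_abs, abs_of_nonneg (hgnn ω)]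
      exact le_trans (hgle 0 ω) (hule _ ω)
  have hintF : Filter.Tendsto (fun n => ∫ ω, uu (F n) ω ∂P) Filter.atTop (nhds (∫ ω, g ω ∂P)) := by
    refine tendsto_integral_of_dominated_convergence (fun _ => (1:ℝ))
      (fun n => (humeas _ (hmeas _ (hFmem n))).aestronglyMeasurable)
      (integrable_const 1) (fun n => Filter.Eventually.of_forall fun ω => ?_)
      (Filter.Eventually.of_forall hgtend)
    rw [Real.norm_eq_abs, abs_of_nonneg (hunn _ ω)]; exact hule _ ω
  have hintF' : Filter.Tendsto (fun n => ∫ ω, uu (F n) ω ∂P) Filter.atTop (nhds I) := by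
    have hub : Filter.Tendsto (fun n : ℕ => I + 1 / ((n:ℝ) + 1)) Filter.atTop (nhds I) := by
      have h0 : Filter.Tendsto (fun n : ℕ => I + 1 / ((n:ℝ) + 1)) Filter.atTop (nhds (I + 0)) :=
        Filter.Tendsto.add tendsto_const_nhds tendsto_one_div_add_atTop_nhds_zero_nat
      simpa using h0
    exact tendsto_of_tendsto_of_tendsto_of_le_of_le tendsto_const_nhds hub
      (fun n => hIle _ (hFmem n)) (fun n => le_of_lt (hFint_lt n))
  have hIg : ∫ ω, g ω ∂P = I := tendsto_nhds_unique hintF hintF'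
  refine ⟨F, hFmem, ?_⟩
  intro ξ hξ
  set v : Ω → ℝ := uu ξ with hv
  have hζmem : ∀ n, combf ξ (F n) ∈ Ξ := fun n => hcombmem _ hξ _ (hFmem n)
  have huζ : ∀ n (ω : Ω), uu (combf ξ (F n)) ω = min (v ω) (uu (F n) ω) := by
    intro n ω
    show min ‖x - combf ξ (F n) ω‖ 1 = _
    rw [hcombnorm, minmin]
  have hmg : Measurable fun ω => min (v ω) (g ω) := (humeas ξ (hmeas ξ hξ)).min hgmeas
  have hmgint : Integrable (fun ω => min (v ω) (g ω)) P := by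
    refine (integrable_const (1 : ℝ)).mono' hmg.aestronglyMeasurable ?_
    refine Filter.Eventually.of_forall fun ω => ?_
    rw [Real.norm_eq_abs, abs_of_nonneg (le_min (hunn ξ ω) (hgnn ω))]
    exact le_trans (min_le_left _ _) (hule ξ ω)
  have hminT : Filter.Tendsto (fun n => ∫ ω, uu (combf ξ (F n)) ω ∂P) Filter.atTop
      (nhds (∫ ω, min (v ω) (g ω) ∂P)) := by
    refine tendsto_integral_of_dominated_convergence (fun _ => (1:ℝ))
      (fun n => (humeas _ (hmeas _ (hζmem n))).aestronglyMeasurable)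
      (integrable_const 1) (fun n => Filter.Eventually.of_forall fun ω => ?_)
      (Filter.Eventually.of_forall fun ω => ?_)
    · rw [Real.norm_eq_abs, abs_of_nonneg (hunn _ ω)]; exact hule _ ω
    · simp only [huζ]
      exact tendsto_const_nhds.min (hgtend ω)
  have hIlemin : I ≤ ∫ ω, min (v ω) (g ω) ∂P :=
    ge_of_tendsto' hminT fun n => hIle _ (hζmem n)
  have hminleI : ∫ ω, min (v ω) (g ω) ∂P ≤ I := by
    rw [← hIg]
    exact integral_mono hmgint hgint fun ω => min_le_right _ _
  have hdint : ∫ ω, (g ω - min (v ω) (g ω)) ∂P = 0 := by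
    rw [integral_sub hgint hmgint, hIg]
    linarith
  have hdzero : (fun ω => g ω - min (v ω) (g ω)) =ᵐ[P] 0 := by
    rw [← integral_eq_zero_iff_of_nonneg (fun ω => sub_nonneg.mpr (min_le_right _ _))
      (hgint.sub hmgint)]
    exact hdint
  filter_upwards [hdzero] with ω hω
  have : g ω = min (v ω) (g ω) := by
    have := sub_eq_zero.mp hω
    linarith [this]
  calc (⨅ n, min ‖x - F n ω‖ 1) = g ω := rfl
    _ = min (v ω) (g ω) := this
    _ ≤ v ω := min_le_left _ _
/-- Theorem 2.4 (p = 0 case): a nonempty, F-decomposable, probability-closed family of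
measurable random elements is the family of measurable selections of a random closed set. -/
theorem stmt1 {Ω X : Type*} [MeasurableSpace Ω] [NormedAddCommGroup X] [NormedSpace ℝ X]
    [CompleteSpace X] [TopologicalSpace.SeparableSpace X] [MeasurableSpace X] [BorelSpace X]
    (P : Measure Ω) [IsProbabilityMeasure P] (hPc : P.IsComplete)
    (Ξ : Set (Ω → X)) (hne : Ξ.Nonempty)
    (hmeas : ∀ ξ ∈ Ξ, Measurable ξ)
    (hdec : ∀ ξ ∈ Ξ, ∀ η ∈ Ξ, ∀ A : Set Ω, MeasurableSet A → (fun ω => if ω ∈ A then ξ ω else η ω) ∈ Ξ)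
    (hclosed : ∀ γ : Ω → X, Measurable γ →
      (∃ f : ℕ → Ω → X, (∀ n, f n ∈ Ξ) ∧ TendstoInMeasure P f Filter.atTop γ) → γ ∈ Ξ) :
    ∃ Y : Ω → Set X, (∀ ω, IsClosed (Y ω)) ∧
      MeasurableSet {p : Ω × X | p.2 ∈ Y p.1} ∧
      Ξ = {ξ : Ω → X | Measurable ξ ∧ ∀ᵐ ω ∂P, ξ ω ∈ Y ω} := by
  haveI : SecondCountableTopology X := UniformSpace.secondCountable_of_separable X
  haveI : Nonempty X := ⟨0⟩
  obtain ⟨ξ₀, hξ₀⟩ := hne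
  set D : ℕ → X := TopologicalSpace.denseSeq X with hD
  choose F hFmem hFkey using fun i : ℕ =>
    stmt1_pack P Ξ ⟨ξ₀, hξ₀⟩ hmeas hdec (D i)
  -- the countable family of selections
  set ξk : ℕ → Ω → X := fun k => F (Nat.unpair k).1 (Nat.unpair k).2 with hξk
  have hξkmem : ∀ k, ξk k ∈ Ξ := fun k => hFmem _ _
  have hξkmeas : ∀ k, Measurable (ξk k) := fun k => hmeas _ (hξkmem k)
  set Y : Ω → Set X := fun ω => closure (Set.range fun k => ξk k ω) with hY
  have hYclosed : ∀ ω, IsClosed (Y ω) := fun ω => isClosed_closure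
  -- graph measurability
  have hgraph : MeasurableSet {p : Ω × X | p.2 ∈ Y p.1} := by
    have heq : {p : Ω × X | p.2 ∈ Y p.1} =
        ⋂ m : ℕ, ⋃ k : ℕ, {p : Ω × X | ‖p.2 - ξk k p.1‖ < 1 / (m + 1)} := by
      ext p
      simp only [Set.mem_iInter, Set.mem_iUnion, Set.mem_setOf_eq]
      constructor
      · intro hp m
        obtain ⟨b, ⟨k, rfl⟩, hb⟩ := Metric.mem_closure_iff.mp hp (1 / (m + 1)) (by positivity)
        exact ⟨k, by rwa [dist_eq_norm] at hb⟩
      · intro h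
        rw [Metric.mem_closure_iff]
        intro ε hε
        obtain ⟨m, hm⟩ := exists_nat_one_div_lt hε
        obtain ⟨k, hk⟩ := h m
        exact ⟨ξk k p.1, ⟨k, rfl⟩, by rw [dist_eq_norm]; exact lt_trans hk hm⟩
    rw [heq]
    refine MeasurableSet.iInter fun m => MeasurableSet.iUnion fun k => ?_
    have hf : Measurable fun p : Ω × X => ‖p.2 - ξk k p.1‖ :=
      (measurable_snd.sub ((hξkmeas k).comp measurable_fst)).norm
    exact measurableSet_lt hf measurable_const
  refine ⟨Y, hYclosed, hgraph, ?_⟩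
  ext ξ
  simp only [Set.mem_setOf_eq]
  constructor
  · -- Ξ ⊆ selections
    intro hξ
    refine ⟨hmeas ξ hξ, ?_⟩
    have hae : ∀ᵐ ω ∂P, ∀ i : ℕ,
        (⨅ n, min ‖D i - F i n ω‖ 1) ≤ min ‖D i - ξ ω‖ 1 :=
      (MeasureTheory.ae_all_iff).mpr fun i => hFkey i ξ hξ
    filter_upwards [hae] with ω hω
    rw [Metric.mem_closure_iff]
    intro ε hε
    set δ : ℝ := min ε 1 with hδ
    have hδpos : 0 < δ := lt_min hε one_pos
    have hδ1 : δ ≤ 1 := min_le_right _ _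
    obtain ⟨i, hi⟩ := Metric.denseRange_iff.mp (TopologicalSpace.denseRange_denseSeq X)
      (ξ ω) (δ / 3) (by positivity)
    have h1 : (⨅ n, min ‖D i - F i n ω‖ 1) < δ / 2 := by
      refine lt_of_le_of_lt (hω i) ?_
      refine lt_of_le_of_lt (min_le_left _ _) ?_
      rw [← dist_eq_norm, dist_comm]
      exact lt_of_lt_of_le hi (by linarith)
    obtain ⟨n, hn⟩ := exists_lt_of_ciInf_lt h1
    have hn' : ‖D i - F i n ω‖ < δ / 2 := by
      rcases min_cases ‖D i - F i n ω‖ (1:ℝ) with ⟨he, _⟩ | ⟨he, hle⟩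
      · rwa [he] at hn
      · rw [he] at hn; linarith
    refine ⟨ξk (Nat.pair i n) ω, ⟨Nat.pair i n, rfl⟩, ?_⟩
    have hkk : ξk (Nat.pair i n) ω = F i n ω := by
      simp only [hξk, Nat.unpair_pair]
    rw [hkk]
    calc dist (ξ ω) (F i n ω) ≤ dist (ξ ω) (D i) + dist (D i) (F i n ω) := dist_triangle _ _ _
      _ < δ / 3 + δ / 2 := by
          refine add_lt_add hi ?_
          rw [dist_eq_norm]; exact hn'
      _ < δ := by linarith
      _ ≤ ε := min_le_left _ _
  · -- selections ⊆ Ξ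
    rintro ⟨hγmeas, hγae⟩
    set B : ℕ → ℕ → Set Ω := fun m k => {ω | ‖ξ ω - ξk k ω‖ < 1 / (m + 1)} with hB
    have hBmeas : ∀ m k, MeasurableSet (B m k) :=
      fun m k => measurableSet_lt ((hγmeas.sub (hξkmeas k)).norm) measurable_const
    set C : ℕ → ℕ → Set Ω := fun m N => B m N \ ⋃ j ∈ Set.Iio N, B m j with hC
    have hCmeas : ∀ m N, MeasurableSet (C m N) := fun m N =>
      (hBmeas m N).diff (MeasurableSet.biUnion (Set.to_countable _) fun j _ => hBmeas m j)
    set η : ℕ → Ω → X := fun m ω =>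
      if h : ∃ k, ω ∈ B m k then ξk (Nat.find h) ω else ξ₀ ω with hη
    -- finite truncations
    set Z : ℕ → ℕ → Ω → X := fun m N => Nat.rec ξ₀
      (fun N ZN => fun ω => @ite X (ω ∈ C m N) (Classical.propDecidable _) (ξk N ω) (ZN ω)) N
      with hZ
    have hZsucc : ∀ m N, Z m (N + 1) =
        fun ω => @ite X (ω ∈ C m N) (Classical.propDecidable _) (ξk N ω) (Z m N ω) :=
      fun m N => rfl
    have hZsucc' : ∀ m N (ω : Ω), Z m (N + 1) ω =
        @ite X (ω ∈ C m N) (Classical.propDecidable _) (ξk N ω) (Z m N ω) :=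
      fun m N ω => rfl
    have hZmem : ∀ m N, Z m N ∈ Ξ := by
      intro m N
      induction N with
      | zero => exact hξ₀
      | succ N ih =>
          rw [hZsucc]
          exact hdec (ξk N) (hξkmem N) (Z m N) ih (C m N) (hCmeas m N)
    have hZlim : ∀ m (ω : Ω), ∃ N₀, ∀ N, N₀ ≤ N → Z m N ω = η m ω := by
      intro m ω
      by_cases h : ∃ k, ω ∈ B m k
      · set k₀ := Nat.find h with hk₀
        have hωC : ω ∈ C m k₀ := by
          refine ⟨Nat.find_spec h, ?_⟩
          intro hcon
          simp only [Set.mem_iUnion, Set.mem_Iio] at hcon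
          obtain ⟨j, hj, hωj⟩ := hcon
          exact Nat.find_min h hj hωj
        have hωnC : ∀ N, k₀ < N → ω ∉ C m N := by
          intro N hN hωN
          refine hωN.2 ?_
          simp only [Set.mem_iUnion, Set.mem_Iio]
          exact ⟨k₀, hN, Nat.find_spec h⟩
        have hηω : η m ω = ξk k₀ ω := by rw [hη]; simp only [dif_pos h]; rfl
        refine ⟨k₀ + 1, ?_⟩
        refine Nat.le_induction ?_ ?_
        · show Z m (k₀ + 1) ω = η m ω
          rw [hZsucc', if_pos hωC, hηω]
        · intro N hN ih
          rw [hZsucc', if_neg (hωnC N (by omega)), ih]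
      · have hωnB : ∀ N, ω ∉ C m N := fun N hωN => h ⟨N, hωN.1⟩
        have hηω : η m ω = ξ₀ ω := by rw [hη]; simp only [dif_neg h]
        refine ⟨0, fun N _ => ?_⟩
        induction N with
        | zero => exact hηω.symm
        | succ N ih =>
            rw [hZsucc', if_neg (hωnB N), ih (Nat.zero_le N)]
    have hZtend : ∀ m (ω : Ω),
        Filter.Tendsto (fun N => Z m N ω) Filter.atTop (nhds (η m ω)) := by
      intro m ω
      obtain ⟨N₀, hN₀⟩ := hZlim m ω
      exact Filter.Tendsto.congr'
        (Filter.eventually_atTop.mpr ⟨N₀, fun N hN => (hN₀ N hN).symm⟩) tendsto_const_nhds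
    have hηmeas : ∀ m, Measurable (η m) := fun m =>
      measurable_of_tendsto_metrizable' Filter.atTop
        (fun N => hmeas _ (hZmem m N)) (tendsto_pi_nhds.mpr (hZtend m))
    have hηmem : ∀ m, η m ∈ Ξ := by
      intro m
      refine hclosed (η m) (hηmeas m) ⟨Z m, hZmem m, ?_⟩
      exact tendstoInMeasure_of_tendsto_ae (fun N => (hmeas _ (hZmem m N)).aestronglyMeasurable)
        (Filter.Eventually.of_forall (hZtend m))
    have hηγ : ∀ᵐ ω ∂P, ∀ m, ‖ξ ω - η m ω‖ < 1 / (m + 1) := by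
      filter_upwards [hγae] with ω hω
      intro m
      have h : ∃ k, ω ∈ B m k := by
        obtain ⟨b, ⟨k, rfl⟩, hb⟩ := Metric.mem_closure_iff.mp hω (1 / (m + 1)) (by positivity)
        exact ⟨k, by rwa [hB, Set.mem_setOf_eq, ← dist_eq_norm]⟩
      have : η m ω = ξk (Nat.find h) ω := by rw [hη]; simp only [dif_pos h]
      rw [this]
      exact Nat.find_spec h
    have hηtend : ∀ᵐ ω ∂P, Filter.Tendsto (fun m => η m ω) Filter.atTop (nhds (ξ ω)) := by
      filter_upwards [hηγ] with ω hω
      rw [tendsto_iff_dist_tendsto_zero]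
      refine squeeze_zero (fun m => dist_nonneg) (fun m => ?_)
        tendsto_one_div_add_atTop_nhds_zero_nat
      rw [dist_comm, dist_eq_norm]
      exact le_of_lt (hω m)
    exact hclosed ξ hγmeas ⟨η, hηmem,
      tendstoInMeasure_of_tendsto_ae (fun m => (hηmeas m).aestronglyMeasurable) hηtend⟩
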